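/- For q = exp(iπ/p), the fusion product formula V^j_{r,0} ⊙ V^m_{s,0} = ∑_{i=0}^{s} q^{-ij} [r+i choose r]_{q²} V^{{j,m}}_{r+i, s-i, 0} defines a map intertwining the deconcatenation coactions: applying the coaction (deconcatenation up to the first vertex) after ⊙ agrees with applying the tensor-product coaction before ⊙. -/

import Mathlib

open TensorProduct

/-- `q = exp(iπ/p)`. -/
noncomputable def qRoot (p : ℕ) : ℂ := Complex.exp (Real.pi * Complex.I / p)

/-- The Gaussian binomial coefficient `[n choose k]_t` via the q-Pascal recursion. -/
def qChoose {R : Type*} [CommRing R] (q : R) : ℕ → ℕ → R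
  | _, 0 => 1
  | 0, _ + 1 => 0
  | n + 1, k + 1 => qChoose q n k + q ^ (k + 1) * qChoose q n (k + 1)

/- Models: the Yetter–Drinfeld module `V^j` has basis `V^j_{r,0}`, `r ∈ ℕ` (`ℕ →₀ ℂ`);
the Nichols/shuffle algebra `H` has basis `F(a)`, `a ∈ ℕ` (`ℕ →₀ ℂ`); the two-vertex
module has basis `V^{{j,m}}_{t₁,t₂,0}`, `(t₁,t₂) ∈ ℕ × ℕ` (`(ℕ × ℕ) →₀ ℂ`). -/

/-- The fusion product
`V^j_{r,0} ⊙ V^m_{s,0} = ∑_{i=0}^{s} q^{-ij} [r+i choose r]_{q²} V^{{j,m}}_{r+i,s-i,0}`,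
as a linear map from `V^j ⊗ V^m` to the two-vertex module. -/
noncomputable def fus (p : ℕ) (j : ℤ) :
    TensorProduct ℂ (ℕ →₀ ℂ) (ℕ →₀ ℂ) →ₗ[ℂ] ((ℕ × ℕ) →₀ ℂ) :=
  TensorProduct.lift
    (Finsupp.lsum ℂ fun r =>
      LinearMap.toSpanSingleton ℂ _
        (Finsupp.lsum ℂ fun s =>
          LinearMap.toSpanSingleton ℂ _
            (∑ i ∈ Finset.range (s + 1),
              ((qRoot p) ^ (-((i : ℤ) * j)) * qChoose ((qRoot p) ^ 2) (r + i) r) •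
                Finsupp.single (r + i, s - i) (1 : ℂ))))

/-- The coaction on the two-vertex module: deconcatenation up to the first vertex,
`δ(V^{{j,m}}_{t₁,t₂,0}) = ∑_{a=0}^{t₁} F(a) ⊗ V^{{j,m}}_{t₁-a,t₂,0}`. -/
noncomputable def deltaW :
    ((ℕ × ℕ) →₀ ℂ) →ₗ[ℂ] TensorProduct ℂ (ℕ →₀ ℂ) ((ℕ × ℕ) →₀ ℂ) :=
  Finsupp.lsum ℂ fun st =>
    LinearMap.toSpanSingleton ℂ _
      (∑ a ∈ Finset.range (st.1 + 1),
        Finsupp.single a (1 : ℂ) ⊗ₜ[ℂ] Finsupp.single (st.1 - a, st.2) (1 : ℂ))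

section lemmas
variable {R : Type*} [CommRing R] (q : R)

@[simp] lemma qChoose_zero_right (n : ℕ) : qChoose q n 0 = 1 := by cases n <;> rfl

lemma qChoose_succ_succ (n k : ℕ) :
    qChoose q (n + 1) (k + 1) = qChoose q n k + q ^ (k + 1) * qChoose q n (k + 1) := rfl

lemma qChoose_eq_zero {n k : ℕ} (h : n < k) : qChoose q n k = 0 := by
  induction n generalizing k with
  | zero => cases k with
    | zero => omega
    | succ k => rfl
  | succ n ih => cases k with
    | zero => omega
    | succ k =>
      rw [qChoose_succ_succ, ih (by omega), ih (by omega)]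
      ring

lemma qChoose_one (n : ℕ) : qChoose q n 1 = ∑ x ∈ Finset.range n, q ^ x := by
  induction n with
  | zero => rfl
  | succ n ih =>
    rw [show (1:ℕ) = 0 + 1 from rfl, qChoose_succ_succ, Finset.sum_range_succ' _ n]
    simp only [qChoose_zero_right, pow_zero, ih, Finset.mul_sum, pow_succ, pow_one]
    rw [add_comm]
    congr 1
    exact Finset.sum_congr rfl fun x _ => by ring

lemma qChoose_pascal' (n k : ℕ) :
    qChoose q (n + 1) (k + 1) = q ^ (n - k) * qChoose q n k + qChoose q n (k + 1) := by
  induction n generalizing k with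
  | zero => cases k with
    | zero => simp [qChoose_succ_succ, qChoose_eq_zero]
    | succ k => simp [qChoose_succ_succ, qChoose_eq_zero]
  | succ n ih =>
    cases k with
    | zero =>
      simp only [Nat.zero_add, Nat.sub_zero, qChoose_zero_right, mul_one, qChoose_one]
      rw [Finset.sum_range_succ]; ring
    | succ k =>
      have hA : qChoose q (n + 1 + 1) (k + 1 + 1) =
          (q ^ (n - k) * qChoose q n k + qChoose q n (k + 1)) +
            q ^ (k + 1 + 1) * (q ^ (n - (k + 1)) * qChoose q n (k + 1) + qChoose q n (k + 1 + 1)) := by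
        rw [qChoose_succ_succ, ih k, ih (k + 1)]
      have hB : q ^ (n + 1 - (k + 1)) * qChoose q (n + 1) (k + 1) + qChoose q (n + 1) (k + 1 + 1) =
          q ^ (n - k) * (qChoose q n k + q ^ (k + 1) * qChoose q n (k + 1)) +
            (qChoose q n (k + 1) + q ^ (k + 1 + 1) * qChoose q n (k + 1 + 1)) := by
        rw [qChoose_succ_succ, qChoose_succ_succ, show n + 1 - (k + 1) = n - k from by omega]
      rw [hA, hB]
      by_cases h : k + 1 ≤ n
      · have hq : q ^ (k + 1 + 1) * q ^ (n - (k + 1)) = q ^ (n - k) * q ^ (k + 1) := by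
          rw [← pow_add, ← pow_add]; congr 1; omega
        linear_combination qChoose q n (k + 1) * hq
      · have hX : qChoose q n (k + 1) = 0 := qChoose_eq_zero q (by omega)
        rw [hX]; ring

lemma qVan (m n k : ℕ) :
    qChoose q (m + n) k =
      ∑ a ∈ Finset.range (k + 1),
        q ^ ((m - a) * (k - a)) * qChoose q m a * qChoose q n (k - a) := by
  induction n generalizing k with
  | zero =>
    rw [Finset.sum_range_succ]
    simp only [Nat.sub_self, Nat.add_zero, mul_zero, pow_zero, one_mul, qChoose_zero_right, mul_one]
    rw [Finset.sum_eq_zero, zero_add]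
    intro a ha
    rw [qChoose_eq_zero q (k := k - a) (by simp at ha; omega)]
    ring
  | succ n ih =>
    cases k with
    | zero => simp
    | succ k =>
      rw [show m + (n + 1) = (m + n) + 1 from rfl, qChoose_pascal', ih k, ih (k + 1),
        Finset.mul_sum, Finset.sum_range_succ _ (k + 1), Finset.sum_range_succ _ (k + 1)]
      simp only [Nat.sub_self, mul_zero, pow_zero, one_mul, qChoose_zero_right, mul_one]
      rw [← add_assoc, ← Finset.sum_add_distrib]
      congr 1
      refine Finset.sum_congr rfl fun a ha => ?_
      simp only [Finset.mem_range] at ha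
      have ha' : a ≤ k := by omega
      rw [show k + 1 - a = (k - a) + 1 from by omega, qChoose_pascal']
      by_cases h1 : a ≤ m
      · by_cases h2 : k - a ≤ n
        · have hq : q ^ (m + n - k) * q ^ ((m - a) * (k - a)) =
              q ^ ((m - a) * (k - a + 1)) * q ^ (n - (k - a)) := by
            rw [← pow_add, ← pow_add]; congr 1
            have h3 : (m - a) * (k - a + 1) = (m - a) * (k - a) + (m - a) := by ring
            omega
          linear_combination (qChoose q m a * qChoose q n (k - a)) * hq
        · rw [qChoose_eq_zero q (k := k - a) (by omega)]; ring
      · rw [qChoose_eq_zero q (n := m) (by omega)]; ring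

end lemmas

/-- swap triangular double sums -/
lemma tri_swap {M : Type*} [AddCommMonoid M] (s : ℕ) (g : ℕ → ℕ → M) :
    ∑ b ∈ Finset.range (s + 1), ∑ i ∈ Finset.Icc b s, g b i
      = ∑ i ∈ Finset.range (s + 1), ∑ b ∈ Finset.range (i + 1), g b i := by
  rw [Finset.sum_sigma', Finset.sum_sigma']
  apply Finset.sum_nbij' (fun x => ⟨x.2, x.1⟩) (fun x => ⟨x.2, x.1⟩) <;>
    simp (config := { contextual := true }) [Finset.mem_sigma, Finset.mem_Icc,
      Finset.mem_range] <;> omega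

lemma icc_reindex {M : Type*} [AddCommMonoid M] (b s : ℕ) (hb : b ≤ s) (f : ℕ → M) :
    ∑ i' ∈ Finset.range (s - b + 1), f i' = ∑ i ∈ Finset.Icc b s, f (i - b) := by
  apply Finset.sum_nbij' (fun i' => b + i') (fun i => i - b) <;>
    first
      | (intro x hx
         simp only [Finset.mem_range, Finset.mem_Icc] at hx ⊢
         omega)
      | (intro x hx
         congr 1
         simp only [Finset.mem_range, Finset.mem_Icc] at hx
         omega)

/-- the scalar identity -/
lemma scalar_id (p : ℕ) (j : ℤ) (r i c : ℕ) (hc : c ≤ r + i) :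
    ∑ x ∈ (Finset.range (i + 1) ×ˢ Finset.range (r + 1)).filter (fun x => x.1 + x.2 = c),
        (qRoot p ^ ((2 * ((r : ℤ) - (x.2 : ℤ)) - j) * (x.1 : ℤ))
            * qChoose (qRoot p ^ 2) (x.2 + x.1) x.2)
          * (qRoot p ^ (-(((i - x.1 : ℕ) : ℤ) * j))
            * qChoose (qRoot p ^ 2) ((r - x.2) + (i - x.1)) (r - x.2))
      = qRoot p ^ (-((i : ℤ) * j)) * qChoose (qRoot p ^ 2) (r + i) r := by
  have hq : qRoot p ≠ 0 := Complex.exp_ne_zero _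
  set q : ℂ := qRoot p with hqdef
  have step : ∀ x ∈ (Finset.range (i + 1) ×ˢ Finset.range (r + 1)).filter
      (fun x => x.1 + x.2 = c),
      (q ^ ((2 * ((r : ℤ) - (x.2 : ℤ)) - j) * (x.1 : ℤ)) * qChoose (q ^ 2) (x.2 + x.1) x.2)
        * (q ^ (-(((i - x.1 : ℕ) : ℤ) * j))
          * qChoose (q ^ 2) ((r - x.2) + (i - x.1)) (r - x.2))
      = q ^ (-((i : ℤ) * j)) * ((q ^ 2) ^ ((r - x.2) * x.1)
          * qChoose (q ^ 2) (x.2 + x.1) x.2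
          * qChoose (q ^ 2) ((r - x.2) + (i - x.1)) (r - x.2)) := by
    rintro ⟨b, a⟩ hx
    simp only [Finset.mem_filter, Finset.mem_product, Finset.mem_range] at hx
    obtain ⟨⟨hb, ha⟩, hab⟩ := hx
    have ha' : a ≤ r := by omega
    have hb' : b ≤ i := by omega
    have h1 : ((i - b : ℕ) : ℤ) = (i : ℤ) - b := by omega
    have h2 : ((q : ℂ) ^ 2) ^ ((r - a) * b) = q ^ ((2 * ((r : ℤ) - (a : ℤ))) * (b : ℤ)) := by
      rw [← pow_mul, ← zpow_natCast q]
      congr 1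
      have : ((r - a : ℕ) : ℤ) = (r : ℤ) - a := by omega
      push_cast
      rw [this]; ring
    simp only []
    rw [h1, h2]
    rw [mul_comm (q ^ ((2 * ((r:ℤ) - (a:ℤ)) - j) * (b:ℤ))) (qChoose (q^2) (a + b) a)]
    rw [mul_assoc, mul_assoc, ← mul_assoc (q ^ ((2 * ((r:ℤ) - (a:ℤ)) - j) * (b:ℤ))),
      ← zpow_add₀ hq]
    rw [show (2 * ((r:ℤ) - (a:ℤ)) - j) * (b:ℤ) + (-(((i:ℤ) - b) * j))
        = (-((i:ℤ) * j)) + 2 * ((r:ℤ) - (a:ℤ)) * (b:ℤ) from by ring, zpow_add₀ hq]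
    ring
  rw [Finset.sum_congr rfl step, ← Finset.mul_sum]
  congr 1
  -- now the pure t-identity
  set t : ℂ := q ^ 2 with ht
  rw [show r + i = c + (r + i - c) from by omega, qVan t c (r + i - c) r]
  rw [← Finset.sum_filter_add_sum_filter_not (Finset.range (r + 1))
    (fun a => a ≤ c ∧ c ≤ i + a)]
  have hzero : ∑ a ∈ (Finset.range (r + 1)).filter (fun a => ¬(a ≤ c ∧ c ≤ i + a)),
      t ^ ((c - a) * (r - a)) * qChoose t c a * qChoose t (r + i - c) (r - a) = 0 := by
    apply Finset.sum_eq_zero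
    intro a ha
    simp only [Finset.mem_filter, Finset.mem_range, not_and, not_le] at ha
    obtain ⟨ha1, ha2⟩ := ha
    by_cases h : a ≤ c
    · rw [qChoose_eq_zero t (n := r + i - c) (by omega)]; ring
    · rw [qChoose_eq_zero t (n := c) (by omega)]; ring
  rw [hzero, add_zero]
  symm
  apply Finset.sum_nbij' (fun a => ((c - a, a) : ℕ × ℕ)) (fun x => x.2)
  · intro a ha
    simp only [Finset.mem_filter, Finset.mem_range, Finset.mem_product] at ha ⊢
    omega
  · intro x hx
    simp only [Finset.mem_filter, Finset.mem_range, Finset.mem_product] at hx ⊢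
    omega
  · intro a ha; rfl
  · intro x hx
    simp only [Finset.mem_filter, Finset.mem_range, Finset.mem_product] at hx
    have : c - x.2 = x.1 := by omega
    simp [this]
  · intro a ha
    simp only [Finset.mem_filter, Finset.mem_range] at ha
    obtain ⟨ha0, ha1, ha2⟩ := ha
    rw [show a + (c - a) = c from by omega,
      show (r - a) + (i - (c - a)) = r + i - c from by omega,
      mul_comm (c - a) (r - a)]

lemma fus_single (p : ℕ) (j : ℤ) (r s : ℕ) :
    fus p j (Finsupp.single r (1 : ℂ) ⊗ₜ[ℂ] Finsupp.single s (1 : ℂ)) =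
      ∑ i ∈ Finset.range (s + 1),
        ((qRoot p) ^ (-((i : ℤ) * j)) * qChoose ((qRoot p) ^ 2) (r + i) r) •
          Finsupp.single (r + i, s - i) (1 : ℂ) := by
  simp [fus, TensorProduct.lift.tmul, Finsupp.lsum_single, LinearMap.toSpanSingleton_apply]

lemma deltaW_single (t₁ t₂ : ℕ) :
    deltaW (Finsupp.single (t₁, t₂) (1 : ℂ)) =
      ∑ a ∈ Finset.range (t₁ + 1),
        Finsupp.single a (1 : ℂ) ⊗ₜ[ℂ] Finsupp.single (t₁ - a, t₂) (1 : ℂ) := by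
  simp [deltaW, Finsupp.lsum_single, LinearMap.toSpanSingleton_apply]


/-- the fusion product intertwines the deconcatenation coactions: applying
the coaction (deconcatenation up to the first vertex) after `⊙` agrees with first
applying the codiagonal coaction on `V^j ⊗ V^m` — namely
`V^j_{r,0} ⊗ V^m_{s,0} ↦ ∑_{a,b} q^{(2(r-a)-j)b} [a+b choose a]_{q²}
F(a+b) ⊗ (V^j_{r-a,0} ⊗ V^m_{s-b,0})`, using `Δ(F(a)) = ∑ F(b) ⊗ F(a-b)`, the product
`F(a)F(b) = [a+b choose a]_{q²}F(a+b)` and the braiding of `F(b)` past the dressed vertex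
`V^j_{r-a,0}` — and then `id_H ⊗ ⊙`. -/
theorem fusion_intertwines_coaction (p : ℕ) (hp : 2 ≤ p) (j m : ℤ) (r s : ℕ) :
    deltaW (fus p j (Finsupp.single r (1 : ℂ) ⊗ₜ[ℂ] Finsupp.single s (1 : ℂ)))
      = TensorProduct.map (LinearMap.id : (ℕ →₀ ℂ) →ₗ[ℂ] (ℕ →₀ ℂ)) (fus p j)
          (∑ a ∈ Finset.range (r + 1), ∑ b ∈ Finset.range (s + 1),
            ((qRoot p) ^ ((2 * ((r : ℤ) - (a : ℤ)) - j) * (b : ℤ))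
                * qChoose ((qRoot p) ^ 2) (a + b) a) •
              (Finsupp.single (a + b) (1 : ℂ) ⊗ₜ[ℂ]
                (Finsupp.single (r - a) (1 : ℂ) ⊗ₜ[ℂ] Finsupp.single (s - b) (1 : ℂ)))) := by
  have hL : deltaW (fus p j (Finsupp.single r (1 : ℂ) ⊗ₜ[ℂ] Finsupp.single s (1 : ℂ)))
      = ∑ i ∈ Finset.range (s + 1), ∑ c ∈ Finset.range (r + i + 1),
          ((qRoot p) ^ (-((i : ℤ) * j)) * qChoose ((qRoot p) ^ 2) (r + i) r) •
            (Finsupp.single c (1 : ℂ) ⊗ₜ[ℂ] Finsupp.single (r + i - c, s - i) (1 : ℂ)) := by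
    rw [fus_single, map_sum]
    refine Finset.sum_congr rfl fun i hi => ?_
    rw [map_smul, deltaW_single, Finset.smul_sum]
  rw [hL]
  -- expand the right-hand side
  rw [map_sum]
  simp only [map_sum, LinearMapClass.map_smul, TensorProduct.map_tmul, LinearMap.id_coe,
    id_eq, fus_single, TensorProduct.tmul_sum, TensorProduct.tmul_smul, Finset.smul_sum,
    smul_smul]
  -- now RHS = ∑ a ∑ b ∑ i' ...
  -- reindex i' to Icc b s
  rw [Finset.sum_congr rfl fun a (_ : a ∈ Finset.range (r+1)) =>
    Finset.sum_congr rfl fun b hb =>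
      icc_reindex b s (by simpa using Nat.lt_succ_iff.mp (Finset.mem_range.mp hb)) _]
  -- swap b and i
  rw [Finset.sum_congr rfl fun a (_ : a ∈ Finset.range (r+1)) => tri_swap s _]
  -- swap a and i
  rw [Finset.sum_comm]
  refine Finset.sum_congr rfl fun i hi => ?_
  have his : i ≤ s := by simpa using Nat.lt_succ_iff.mp (Finset.mem_range.mp hi)
  -- swap a and b
  rw [Finset.sum_comm]
  -- group fibers of b + a = c
  conv_rhs => rw [← Finset.sum_product']
  conv_rhs => rw [← Finset.sum_fiberwise_of_maps_to (t := Finset.range (r + i + 1))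
    (g := fun x : ℕ × ℕ => x.1 + x.2) (fun x hx => by
      simp only [Finset.mem_product, Finset.mem_range] at hx ⊢; omega)]
  refine Finset.sum_congr rfl fun c hc => ?_
  have hcri : c ≤ r + i := by simpa using Nat.lt_succ_iff.mp (Finset.mem_range.mp hc)
  have hvec : ∀ x ∈ (Finset.range (i + 1) ×ˢ Finset.range (r + 1)).filter
      (fun x => x.1 + x.2 = c),
      ((qRoot p) ^ ((2 * ((r : ℤ) - (x.2 : ℤ)) - j) * (x.1 : ℤ))
            * qChoose ((qRoot p) ^ 2) (x.2 + x.1) x.2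
          * ((qRoot p) ^ (-(((i - x.1 : ℕ) : ℤ) * j))
            * qChoose ((qRoot p) ^ 2) ((r - x.2) + (i - x.1)) (r - x.2))) •
          (Finsupp.single (x.2 + x.1) (1 : ℂ) ⊗ₜ[ℂ]
            Finsupp.single ((r - x.2) + (i - x.1), s - x.1 - (i - x.1)) (1 : ℂ))
        = ((qRoot p) ^ ((2 * ((r : ℤ) - (x.2 : ℤ)) - j) * (x.1 : ℤ))
            * qChoose ((qRoot p) ^ 2) (x.2 + x.1) x.2
          * ((qRoot p) ^ (-(((i - x.1 : ℕ) : ℤ) * j))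
            * qChoose ((qRoot p) ^ 2) ((r - x.2) + (i - x.1)) (r - x.2))) •
          (Finsupp.single c (1 : ℂ) ⊗ₜ[ℂ]
            Finsupp.single (r + i - c, s - i) (1 : ℂ)) := by
    rintro ⟨b, a⟩ hx
    simp only [Finset.mem_filter, Finset.mem_product, Finset.mem_range] at hx
    obtain ⟨⟨hb, ha⟩, hab⟩ := hx
    dsimp only
    rw [show a + b = c from by omega, show r - a + (i - b) = r + i - c from by omega,
      show s - b - (i - b) = s - i from by omega]
  rw [Finset.sum_congr rfl hvec, ← Finset.sum_smul]
  congr 1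
  exact (scalar_id p j r i c hcri).symm
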